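/- arXiv:2303.09113 — 3 statements merged into one kernel-verified Lean document; each statement's English description precedes it below -/
import Mathlib

section
/- For every T ≥ 1, c · #{ t ∈ {1,…,T} : Q_t > 0 } ≤ Σ_{t=1}^{T} a_t. That is, the number of slots at whose end the processing queue is nonempty is at most the total arrived work divided by the capacity c; this bounds the number of slots an adversary can congest by its total budget of released blocks. -/
open Finset
open scoped Classical

/-- The number of slots in `{1, …, T}` at whose end the processing queue is nonempty
(`Q t > 0`) is at most the total arrived work divided by the capacity `c`:
`c * #{t ∈ {1,…,T} : Q t > 0} ≤ ∑_{t=1}^{T} a t`. -/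
theorem busy_slots_bound
    (c : ℝ) (hc : 0 < c) (a : ℕ → ℝ) (ha : ∀ r, 0 ≤ a r)
    (Q : ℕ → ℝ) (hQ0 : Q 0 = 0)
    (hQ : ∀ t : ℕ, Q (t + 1) = max (Q t + a (t + 1) - c) 0)
    (T : ℕ) (hT : 1 ≤ T) :
    c * (((Finset.Icc 1 T).filter (fun t => 0 < Q t)).card : ℝ)
      ≤ ∑ t ∈ Finset.Icc 1 T, a t := by
  have hQnn : ∀ t, 0 ≤ Q t := by
    intro t
    cases t with
    | zero => simp [hQ0]
    | succ n => rw [hQ]; exact le_max_right _ _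
  have key : ∀ T : ℕ,
      c * (((Finset.Icc 1 T).filter (fun t => 0 < Q t)).card : ℝ) + Q T
        ≤ ∑ t ∈ Finset.Icc 1 T, a t := by
    intro T
    induction T with
    | zero => simp [hQ0]
    | succ n ih =>
      have hins : Finset.Icc 1 (n + 1) = insert (n + 1) (Finset.Icc 1 n) := by
        exact (Finset.insert_Icc_right_eq_Icc_add_one (by omega)).symm
      rw [hins, Finset.filter_insert, Finset.sum_insert (by simp)]
      by_cases h : 0 < Q (n + 1)
      · rw [if_pos h, Finset.card_insert_of_notMem (by simp)]
        have hQeq : Q (n + 1) = Q n + a (n + 1) - c := by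
          rw [hQ]
          exact max_eq_left (by rw [hQ] at h; rcases max_cases (Q n + a (n+1) - c) 0 with ⟨h1,h2⟩|⟨h1,h2⟩ <;> linarith)
        push_cast
        linarith
      · rw [if_neg h]
        have : Q (n + 1) ≤ Q n + a (n + 1) := by
          have := hQnn (n + 1)
          have h0 : Q (n + 1) = 0 := le_antisymm (not_lt.mp h) this
          have := hQnn n
          have := ha (n + 1)
          linarith
        linarith
  have := key T
  have := hQnn T
  linarith
end

section
/- If β ∈ [0, 1/2), then the probability that index 0 is a pivot is at least (1 − 2β)²; in particular it is strictly positive. -/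
open MeasureTheory ProbabilityTheory Finset

/-- An index `t ∈ ℤ` is a *pivot* (for a realization `x : ℤ → ℤ` of the ±1-valued
sequence) if every finite interval of consecutive integers containing `t` has a
strictly positive sum, i.e., strictly more honest (`+1`) than adversarial (`−1`)
block production opportunities. -/
def IsPivot (x : ℤ → ℤ) (t : ℤ) : Prop :=
  ∀ i j : ℤ, i ≤ t → t ≤ j → 0 < ∑ k ∈ Finset.Icc i j, x k

namespace PivotAux

lemma sum_Icc_split (f : ℤ → ℤ) {i c j : ℤ} (h1 : i ≤ c + 1) (h2 : c ≤ j) :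
    ∑ k ∈ Finset.Icc i j, f k
      = (∑ k ∈ Finset.Icc i c, f k) + ∑ k ∈ Finset.Icc (c+1) j, f k := by
  rw [← Finset.sum_union]
  · congr 1
    ext k
    simp only [Finset.mem_Icc, Finset.mem_union]
    omega
  · rw [Finset.disjoint_left]
    intro k hk hk'
    simp only [Finset.mem_Icc] at hk hk'
    omega

lemma e1 {β : ℝ} (hβ0 : 0 ≤ β) (hβ1 : β < 1) :
    ENNReal.ofReal β = ENNReal.ofReal (1 - β) * ENNReal.ofReal (β / (1 - β)) := by
  rw [← ENNReal.ofReal_mul (by linarith)]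
  congr 1
  have h : (1:ℝ) - β ≠ 0 := by linarith
  field_simp

lemma e2 {β : ℝ} (hβ0 : 0 ≤ β) (hβ1 : β < 1) :
    ENNReal.ofReal (1 - β) + ENNReal.ofReal β = 1 := by
  rw [← ENNReal.ofReal_add (by linarith) hβ0]
  norm_num

variable {Ω : Type*} [MeasurableSpace Ω] {μ : Measure Ω} [IsProbabilityMeasure μ]
  {β : ℝ} {X : ℤ → Ω → ℤ}

/-- σ-algebra generated by the coordinates in `S`. -/
def mS (X : ℤ → Ω → ℤ) (S : Set ℤ) : MeasurableSpace Ω :=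
  ⨆ i ∈ S, MeasurableSpace.comap (X i) inferInstance

omit [IsProbabilityMeasure μ] in
lemma measurable_X_mS (X : ℤ → Ω → ℤ) {S : Set ℤ} {k : ℤ} (hk : k ∈ S) :
    Measurable[mS X S] (X k) := by
  intro t _
  have h1 : MeasurableSpace.comap (X k) inferInstance ≤ mS X S := by
    refine le_trans ?_ (le_iSup _ k)
    simp [hk]
  exact h1 _ ⟨t, trivial, rfl⟩

omit [IsProbabilityMeasure μ] in
lemma measurableSet_eq_mS {S : Set ℤ} {a : ℤ} (ha : a ∈ S) (c : ℤ) :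
    MeasurableSet[mS X S] {ω | X a ω = c} := by
  have h := measurable_X_mS (S := S) X ha (MeasurableSet.of_discrete (s := ({c} : Set ℤ)))
  convert h using 1
  rfl

omit [IsProbabilityMeasure μ] in
lemma measurable_sum_mS (X : ℤ → Ω → ℤ) {S : Set ℤ} (t : Finset ℤ) (h : ∀ k ∈ t, k ∈ S) :
    Measurable[mS X S] (fun ω => ∑ k ∈ t, X k ω) :=
  Finset.measurable_sum _ (fun k hk => measurable_X_mS X (h k hk))

omit [IsProbabilityMeasure μ] in
lemma mS_le (hmeas : ∀ k, Measurable (X k)) (S : Set ℤ) :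
    mS X S ≤ ‹MeasurableSpace Ω› :=
  iSup_le fun i => iSup_le fun _ => (hmeas i).comap_le

omit [IsProbabilityMeasure μ] in
lemma indep_mS (hmeas : ∀ k, Measurable (X k))
    (hindep : iIndepFun X μ)
    {S T : Set ℤ} (hST : Disjoint S T) {A B : Set Ω}
    (hA : MeasurableSet[mS X S] A) (hB : MeasurableSet[mS X T] B) :
    μ (A ∩ B) = μ A * μ B := by
  have h : Indep (mS X S) (mS X T) μ :=
    indep_iSup_of_disjoint (fun i => (hmeas i).comap_le) hindep hST
  exact (Indep_iff _ _ _).1 h A B hA hB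

/-- forward bad event: some initial sum starting at `a`, of length at most `n`,
is `≤ -m`. -/
def fwdBad (X : ℤ → Ω → ℤ) (n : ℕ) (a : ℤ) (m : ℕ) : Set Ω :=
  {ω | ∃ j ∈ Finset.Ico a (a + n), ∑ k ∈ Finset.Icc a j, X k ω ≤ -(m:ℤ)}

/-- backward bad event: some final sum ending at `b`, of length at most `n`,
is `≤ -m`. -/
def bwdBad (X : ℤ → Ω → ℤ) (n : ℕ) (b : ℤ) (m : ℕ) : Set Ω :=
  {ω | ∃ i ∈ Finset.Ioc (b - n) b, ∑ k ∈ Finset.Icc i b, X k ω ≤ -(m:ℤ)}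

omit [IsProbabilityMeasure μ] in
lemma fwdBad_mS {S : Set ℤ} {a : ℤ} (hS : ∀ k : ℤ, a ≤ k → k ∈ S) (n : ℕ) (m : ℕ) :
    MeasurableSet[mS X S] (fwdBad X n a m) := by
  have he : fwdBad X n a m
      = ⋃ j ∈ Finset.Ico a (a + (n:ℤ)), {ω | ∑ k ∈ Finset.Icc a j, X k ω ≤ -(m:ℤ)} := by
    ext ω; simp [fwdBad]
  rw [he]
  refine MeasurableSet.biUnion (Finset.Ico a (a + (n:ℤ))).countable_toSet (fun j hj => ?_)
  exact measurable_sum_mS X (Finset.Icc a j)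
    (fun k hk => hS k (Finset.mem_Icc.1 hk).1) (MeasurableSet.of_discrete (s := Set.Iic (-(m:ℤ))))

omit [IsProbabilityMeasure μ] in
lemma bwdBad_mS {S : Set ℤ} {b : ℤ} (hS : ∀ k : ℤ, k ≤ b → k ∈ S) (n : ℕ) (m : ℕ) :
    MeasurableSet[mS X S] (bwdBad X n b m) := by
  have he : bwdBad X n b m
      = ⋃ i ∈ Finset.Ioc (b - (n:ℤ)) b, {ω | ∑ k ∈ Finset.Icc i b, X k ω ≤ -(m:ℤ)} := by
    ext ω; simp [bwdBad]
  rw [he]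
  refine MeasurableSet.biUnion (Finset.Ioc (b - (n:ℤ)) b).countable_toSet (fun i hi => ?_)
  exact measurable_sum_mS X (Finset.Icc i b)
    (fun k hk => hS k (Finset.mem_Icc.1 hk).2) (MeasurableSet.of_discrete (s := Set.Iic (-(m:ℤ))))

lemma null_off (hmeas : ∀ k, Measurable (X k)) (hβ0 : 0 ≤ β) (hβ1 : β ≤ 1)
    (hup : ∀ k, μ {ω | X k ω = 1} = ENNReal.ofReal (1 - β))
    (hdown : ∀ k, μ {ω | X k ω = -1} = ENNReal.ofReal β) (a : ℤ) :
    μ {ω | X a ω ≠ 1 ∧ X a ω ≠ -1} = 0 := by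
  have hA : MeasurableSet {ω | X a ω = 1} := hmeas a (MeasurableSet.of_discrete (s := {1}))
  have hB : MeasurableSet {ω | X a ω = -1} := hmeas a (MeasurableSet.of_discrete (s := {-1}))
  have hd : Disjoint {ω | X a ω = 1} {ω | X a ω = -1} := by
    rw [Set.disjoint_left]
    intro ω h1 h2
    simp only [Set.mem_setOf_eq] at h1 h2
    omega
  have hu : μ ({ω | X a ω = 1} ∪ {ω | X a ω = -1}) = 1 := by
    rw [measure_union hd hB, hup a, hdown a, ← ENNReal.ofReal_add (by linarith) hβ0]
    norm_num
  have he : {ω | X a ω ≠ 1 ∧ X a ω ≠ -1} = ({ω | X a ω = 1} ∪ {ω | X a ω = -1})ᶜ := by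
    ext ω; simp [not_or]
  rw [he, prob_compl_eq_one_sub (hA.union hB), hu, tsub_self]

lemma measure_split (hmeas : ∀ k, Measurable (X k)) (hβ0 : 0 ≤ β) (hβ1 : β ≤ 1)
    (hup : ∀ k, μ {ω | X k ω = 1} = ENNReal.ofReal (1 - β))
    (hdown : ∀ k, μ {ω | X k ω = -1} = ENNReal.ofReal β) (a : ℤ) (E : Set Ω) :
    μ E ≤ μ (E ∩ {ω | X a ω = -1}) + μ (E ∩ {ω | X a ω = 1}) := by
  have h0 : μ {ω | X a ω ≠ 1 ∧ X a ω ≠ -1} = 0 := null_off hmeas hβ0 hβ1 hup hdown a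
  have hsub : E ⊆ (E ∩ {ω | X a ω = -1}) ∪
      ((E ∩ {ω | X a ω = 1}) ∪ {ω | X a ω ≠ 1 ∧ X a ω ≠ -1}) := by
    intro ω hω
    by_cases h1 : X a ω = -1
    · exact Or.inl ⟨hω, h1⟩
    by_cases h2 : X a ω = 1
    · exact Or.inr (Or.inl ⟨hω, h2⟩)
    · exact Or.inr (Or.inr ⟨h2, h1⟩)
  calc μ E ≤ μ ((E ∩ {ω | X a ω = -1}) ∪
      ((E ∩ {ω | X a ω = 1}) ∪ {ω | X a ω ≠ 1 ∧ X a ω ≠ -1})) := measure_mono hsub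
    _ ≤ μ (E ∩ {ω | X a ω = -1}) +
        μ ((E ∩ {ω | X a ω = 1}) ∪ {ω | X a ω ≠ 1 ∧ X a ω ≠ -1}) := measure_union_le _ _
    _ ≤ μ (E ∩ {ω | X a ω = -1}) +
        (μ (E ∩ {ω | X a ω = 1}) + μ {ω | X a ω ≠ 1 ∧ X a ω ≠ -1}) := by
        gcongr; exact measure_union_le _ _
    _ = μ (E ∩ {ω | X a ω = -1}) + μ (E ∩ {ω | X a ω = 1}) := by rw [h0, add_zero]

section Bounds

variable (hmeas : ∀ k, Measurable (X k))
  (hindep : iIndepFun X μ)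
  (hβ0 : 0 ≤ β) (hβ1 : β < 1)
  (hup : ∀ k, μ {ω | X k ω = 1} = ENNReal.ofReal (1 - β))
  (hdown : ∀ k, μ {ω | X k ω = -1} = ENNReal.ofReal β)

include hmeas hindep hβ0 hβ1 hup hdown

lemma fwdBad_bound :
    ∀ (n : ℕ) (a : ℤ) (m : ℕ), 1 ≤ m →
      μ (fwdBad X n a m) ≤ ENNReal.ofReal (β / (1 - β)) ^ m := by
  intro n
  induction n with
  | zero =>
    intro a m _
    have : fwdBad X 0 a m = (∅ : Set Ω) := by
      ext ω; simp [fwdBad]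
    rw [this, measure_empty]
    exact zero_le
  | succ n ih =>
    intro a m hm
    set ρ := ENNReal.ofReal (β / (1 - β)) with hρ
    have hρ0 : 0 ≤ β / (1 - β) := div_nonneg hβ0 (by linarith)
    -- bound on the down part
    have hb1 : μ (fwdBad X (n+1) a m ∩ {ω | X a ω = -1})
        ≤ ENNReal.ofReal β * ρ ^ (m - 1) := by
      rcases eq_or_lt_of_le hm with h1 | h2
      · have hle : μ (fwdBad X (n+1) a m ∩ {ω | X a ω = -1}) ≤ μ {ω | X a ω = -1} :=
          measure_mono Set.inter_subset_right
        rw [hdown a] at hle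
        simpa [← h1] using hle
      · have hsub : fwdBad X (n+1) a m ∩ {ω | X a ω = -1}
            ⊆ {ω | X a ω = -1} ∩ fwdBad X n (a+1) (m-1) := by
          rintro ω ⟨⟨j, hj, hsum⟩, hXa⟩
          simp only [Finset.mem_Ico] at hj
          refine ⟨hXa, ?_⟩
          rcases eq_or_lt_of_le hj.1 with rfl | hlt
          · exfalso
            rw [Finset.Icc_self, Finset.sum_singleton, hXa] at hsum
            omega
          · refine ⟨j, ?_, ?_⟩
            · simp only [Finset.mem_Ico]
              push_cast at hj ⊢
              omega
            · rw [sum_Icc_split (fun k => X k ω) (by omega) hj.1] at hsum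
              rw [Finset.Icc_self, Finset.sum_singleton, hXa] at hsum
              have hcast : ((m - 1 : ℕ) : ℤ) = (m : ℤ) - 1 := by
                push_cast [Nat.cast_sub hm]; ring
              omega
        have hd : Disjoint ({a} : Set ℤ) {k : ℤ | a + 1 ≤ k} := by
          rw [Set.disjoint_left]
          intro k hk hk'
          simp only [Set.mem_singleton_iff] at hk
          simp only [Set.mem_setOf_eq] at hk'
          omega
        have hA : MeasurableSet[mS X ({a} : Set ℤ)] {ω | X a ω = -1} :=
          measurableSet_eq_mS (Set.mem_singleton a) (-1)
        have hB : MeasurableSet[mS X {k : ℤ | a + 1 ≤ k}] (fwdBad X n (a+1) (m-1)) :=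
          fwdBad_mS (fun k hk => hk) n (m-1)
        calc μ (fwdBad X (n+1) a m ∩ {ω | X a ω = -1})
            ≤ μ ({ω | X a ω = -1} ∩ fwdBad X n (a+1) (m-1)) := measure_mono hsub
          _ = μ {ω | X a ω = -1} * μ (fwdBad X n (a+1) (m-1)) :=
              indep_mS hmeas hindep hd hA hB
          _ ≤ ENNReal.ofReal β * ρ ^ (m-1) := by
              rw [hdown a]
              exact mul_le_mul_right (ih (a+1) (m-1) (by omega)) _
    -- bound on the up part
    have hb2 : μ (fwdBad X (n+1) a m ∩ {ω | X a ω = 1})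
        ≤ ENNReal.ofReal (1 - β) * ρ ^ (m + 1) := by
      have hsub : fwdBad X (n+1) a m ∩ {ω | X a ω = 1}
          ⊆ {ω | X a ω = 1} ∩ fwdBad X n (a+1) (m+1) := by
        rintro ω ⟨⟨j, hj, hsum⟩, hXa⟩
        simp only [Finset.mem_Ico] at hj
        refine ⟨hXa, ?_⟩
        rcases eq_or_lt_of_le hj.1 with rfl | hlt
        · exfalso
          rw [Finset.Icc_self, Finset.sum_singleton, hXa] at hsum
          omega
        · refine ⟨j, ?_, ?_⟩
          · simp only [Finset.mem_Ico]
            push_cast at hj ⊢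
            omega
          · rw [sum_Icc_split (fun k => X k ω) (by omega) hj.1] at hsum
            rw [Finset.Icc_self, Finset.sum_singleton, hXa] at hsum
            push_cast
            omega
      have hd : Disjoint ({a} : Set ℤ) {k : ℤ | a + 1 ≤ k} := by
        rw [Set.disjoint_left]
        intro k hk hk'
        simp only [Set.mem_singleton_iff] at hk
        simp only [Set.mem_setOf_eq] at hk'
        omega
      have hA : MeasurableSet[mS X ({a} : Set ℤ)] {ω | X a ω = 1} :=
        measurableSet_eq_mS (Set.mem_singleton a) 1
      have hB : MeasurableSet[mS X {k : ℤ | a + 1 ≤ k}] (fwdBad X n (a+1) (m+1)) :=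
        fwdBad_mS (fun k hk => hk) n (m+1)
      calc μ (fwdBad X (n+1) a m ∩ {ω | X a ω = 1})
          ≤ μ ({ω | X a ω = 1} ∩ fwdBad X n (a+1) (m+1)) := measure_mono hsub
        _ = μ {ω | X a ω = 1} * μ (fwdBad X n (a+1) (m+1)) :=
            indep_mS hmeas hindep hd hA hB
        _ ≤ ENNReal.ofReal (1 - β) * ρ ^ (m+1) := by
            rw [hup a]
            exact mul_le_mul_right (ih (a+1) (m+1) (by omega)) _
    have hsplit := measure_split hmeas hβ0 (le_of_lt hβ1) hup hdown a (fwdBad X (n+1) a m)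
    have halg : ENNReal.ofReal β * ρ ^ (m-1) + ENNReal.ofReal (1 - β) * ρ ^ (m+1) = ρ ^ m := by
      have hm1 : m - 1 + 1 = m := by omega
      calc ENNReal.ofReal β * ρ ^ (m-1) + ENNReal.ofReal (1 - β) * ρ ^ (m+1)
          = ENNReal.ofReal (1 - β) * (ρ * ρ ^ (m-1))
            + (ENNReal.ofReal (1 - β) * ρ) * ρ ^ m := by
            rw [e1 hβ0 hβ1]
            ring
        _ = ENNReal.ofReal (1 - β) * ρ ^ m + ENNReal.ofReal β * ρ ^ m := by
            rw [← pow_succ' ρ (m-1), hm1, ← e1 hβ0 hβ1]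
        _ = (ENNReal.ofReal (1 - β) + ENNReal.ofReal β) * ρ ^ m := by ring
        _ = ρ ^ m := by rw [e2 hβ0 hβ1, one_mul]
    calc μ (fwdBad X (n+1) a m)
        ≤ μ (fwdBad X (n+1) a m ∩ {ω | X a ω = -1})
          + μ (fwdBad X (n+1) a m ∩ {ω | X a ω = 1}) := hsplit
      _ ≤ ENNReal.ofReal β * ρ ^ (m-1) + ENNReal.ofReal (1 - β) * ρ ^ (m+1) :=
          add_le_add hb1 hb2
      _ = ρ ^ m := halg

lemma fwdBad_zero :
    ∀ n : ℕ, μ (fwdBad X n 0 0) ≤ ENNReal.ofReal (2 * β) := by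
  intro n
  cases n with
  | zero =>
    have he : fwdBad X 0 0 0 = (∅ : Set Ω) := by ext ω; simp [fwdBad]
    rw [he, measure_empty]
    exact zero_le
  | succ n =>
    set ρ := ENNReal.ofReal (β / (1 - β)) with hρ
    have hb1 : μ (fwdBad X (n+1) 0 0 ∩ {ω | X 0 ω = -1}) ≤ ENNReal.ofReal β := by
      have hle : μ (fwdBad X (n+1) 0 0 ∩ {ω | X 0 ω = -1}) ≤ μ {ω | X 0 ω = -1} :=
        measure_mono Set.inter_subset_right
      rwa [hdown 0] at hle
    have hb2 : μ (fwdBad X (n+1) 0 0 ∩ {ω | X 0 ω = 1}) ≤ ENNReal.ofReal β := by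
      have hsub : fwdBad X (n+1) 0 0 ∩ {ω | X 0 ω = 1}
          ⊆ {ω | X 0 ω = 1} ∩ fwdBad X n 1 1 := by
        rintro ω ⟨⟨j, hj, hsum⟩, hXa⟩
        simp only [Finset.mem_Ico] at hj
        refine ⟨hXa, ?_⟩
        rcases eq_or_lt_of_le hj.1 with rfl | hlt
        · exfalso
          rw [Finset.Icc_self, Finset.sum_singleton, hXa] at hsum
          omega
        · refine ⟨j, ?_, ?_⟩
          · simp only [Finset.mem_Ico]
            push_cast at hj ⊢
            omega
          · rw [sum_Icc_split (fun k => X k ω) (by omega) hj.1] at hsum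
            rw [Finset.Icc_self, Finset.sum_singleton, hXa] at hsum
            push_cast at hsum ⊢
            omega
      have hd : Disjoint ({0} : Set ℤ) {k : ℤ | 1 ≤ k} := by
        rw [Set.disjoint_left]
        intro k hk hk'
        simp only [Set.mem_singleton_iff] at hk
        simp only [Set.mem_setOf_eq] at hk'
        omega
      have hA : MeasurableSet[mS X ({0} : Set ℤ)] {ω | X 0 ω = 1} :=
        measurableSet_eq_mS (Set.mem_singleton 0) 1
      have hB : MeasurableSet[mS X {k : ℤ | 1 ≤ k}] (fwdBad X n 1 1) :=
        fwdBad_mS (fun k hk => hk) n 1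
      calc μ (fwdBad X (n+1) 0 0 ∩ {ω | X 0 ω = 1})
          ≤ μ ({ω | X 0 ω = 1} ∩ fwdBad X n 1 1) := measure_mono hsub
        _ = μ {ω | X 0 ω = 1} * μ (fwdBad X n 1 1) := indep_mS hmeas hindep hd hA hB
        _ ≤ ENNReal.ofReal (1 - β) * ρ ^ 1 := by
            rw [hup 0]
            exact mul_le_mul_right (fwdBad_bound hmeas hindep hβ0 hβ1 hup hdown n 1 1 le_rfl) _
        _ = ENNReal.ofReal β := by rw [pow_one, ← e1 hβ0 hβ1]
    calc μ (fwdBad X (n+1) 0 0)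
        ≤ μ (fwdBad X (n+1) 0 0 ∩ {ω | X 0 ω = -1})
          + μ (fwdBad X (n+1) 0 0 ∩ {ω | X 0 ω = 1}) :=
          measure_split hmeas hβ0 (le_of_lt hβ1) hup hdown 0 _
      _ ≤ ENNReal.ofReal β + ENNReal.ofReal β := add_le_add hb1 hb2
      _ = ENNReal.ofReal (2 * β) := by
          rw [← ENNReal.ofReal_add hβ0 hβ0]
          congr 1
          ring

lemma bwdBad_bound :
    ∀ (n : ℕ) (b : ℤ) (m : ℕ), 1 ≤ m →
      μ (bwdBad X n b m) ≤ ENNReal.ofReal (β / (1 - β)) ^ m := by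
  intro n
  induction n with
  | zero =>
    intro b m _
    have he : bwdBad X 0 b m = (∅ : Set Ω) := by ext ω; simp [bwdBad]
    rw [he, measure_empty]
    exact zero_le
  | succ n ih =>
    intro b m hm
    set ρ := ENNReal.ofReal (β / (1 - β)) with hρ
    have hbb : b - 1 + 1 = b := by ring
    have hb1 : μ (bwdBad X (n+1) b m ∩ {ω | X b ω = -1})
        ≤ ENNReal.ofReal β * ρ ^ (m - 1) := by
      rcases eq_or_lt_of_le hm with h1 | h2
      · have hle : μ (bwdBad X (n+1) b m ∩ {ω | X b ω = -1}) ≤ μ {ω | X b ω = -1} :=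
          measure_mono Set.inter_subset_right
        rw [hdown b] at hle
        simpa [← h1] using hle
      · have hsub : bwdBad X (n+1) b m ∩ {ω | X b ω = -1}
            ⊆ {ω | X b ω = -1} ∩ bwdBad X n (b-1) (m-1) := by
          rintro ω ⟨⟨i, hi, hsum⟩, hXb⟩
          simp only [Finset.mem_Ioc] at hi
          refine ⟨hXb, ?_⟩
          rcases eq_or_lt_of_le hi.2 with rfl | hlt
          · exfalso
            rw [Finset.Icc_self, Finset.sum_singleton, hXb] at hsum
            omega
          · refine ⟨i, ?_, ?_⟩
            · simp only [Finset.mem_Ioc]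
              push_cast at hi ⊢
              omega
            · rw [sum_Icc_split (fun k => X k ω) (by omega) (by omega : b - 1 ≤ b),
                hbb, Finset.Icc_self, Finset.sum_singleton, hXb] at hsum
              have hcast : ((m - 1 : ℕ) : ℤ) = (m : ℤ) - 1 := by
                push_cast [Nat.cast_sub hm]; ring
              omega
        have hd : Disjoint ({b} : Set ℤ) {k : ℤ | k ≤ b - 1} := by
          rw [Set.disjoint_left]
          intro k hk hk'
          simp only [Set.mem_singleton_iff] at hk
          simp only [Set.mem_setOf_eq] at hk'
          omega
        have hA : MeasurableSet[mS X ({b} : Set ℤ)] {ω | X b ω = -1} :=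
          measurableSet_eq_mS (Set.mem_singleton b) (-1)
        have hB : MeasurableSet[mS X {k : ℤ | k ≤ b - 1}] (bwdBad X n (b-1) (m-1)) :=
          bwdBad_mS (fun k hk => hk) n (m-1)
        calc μ (bwdBad X (n+1) b m ∩ {ω | X b ω = -1})
            ≤ μ ({ω | X b ω = -1} ∩ bwdBad X n (b-1) (m-1)) := measure_mono hsub
          _ = μ {ω | X b ω = -1} * μ (bwdBad X n (b-1) (m-1)) :=
              indep_mS hmeas hindep hd hA hB
          _ ≤ ENNReal.ofReal β * ρ ^ (m-1) := by
              rw [hdown b]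
              exact mul_le_mul_right (ih (b-1) (m-1) (by omega)) _
    have hb2 : μ (bwdBad X (n+1) b m ∩ {ω | X b ω = 1})
        ≤ ENNReal.ofReal (1 - β) * ρ ^ (m + 1) := by
      have hsub : bwdBad X (n+1) b m ∩ {ω | X b ω = 1}
          ⊆ {ω | X b ω = 1} ∩ bwdBad X n (b-1) (m+1) := by
        rintro ω ⟨⟨i, hi, hsum⟩, hXb⟩
        simp only [Finset.mem_Ioc] at hi
        refine ⟨hXb, ?_⟩
        rcases eq_or_lt_of_le hi.2 with rfl | hlt
        · exfalso
          rw [Finset.Icc_self, Finset.sum_singleton, hXb] at hsum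
          omega
        · refine ⟨i, ?_, ?_⟩
          · simp only [Finset.mem_Ioc]
            push_cast at hi ⊢
            omega
          · rw [sum_Icc_split (fun k => X k ω) (by omega) (by omega : b - 1 ≤ b),
              hbb, Finset.Icc_self, Finset.sum_singleton, hXb] at hsum
            push_cast at hsum ⊢
            omega
      have hd : Disjoint ({b} : Set ℤ) {k : ℤ | k ≤ b - 1} := by
        rw [Set.disjoint_left]
        intro k hk hk'
        simp only [Set.mem_singleton_iff] at hk
        simp only [Set.mem_setOf_eq] at hk'
        omega
      have hA : MeasurableSet[mS X ({b} : Set ℤ)] {ω | X b ω = 1} :=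
        measurableSet_eq_mS (Set.mem_singleton b) 1
      have hB : MeasurableSet[mS X {k : ℤ | k ≤ b - 1}] (bwdBad X n (b-1) (m+1)) :=
        bwdBad_mS (fun k hk => hk) n (m+1)
      calc μ (bwdBad X (n+1) b m ∩ {ω | X b ω = 1})
          ≤ μ ({ω | X b ω = 1} ∩ bwdBad X n (b-1) (m+1)) := measure_mono hsub
        _ = μ {ω | X b ω = 1} * μ (bwdBad X n (b-1) (m+1)) :=
            indep_mS hmeas hindep hd hA hB
        _ ≤ ENNReal.ofReal (1 - β) * ρ ^ (m+1) := by
            rw [hup b]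
            exact mul_le_mul_right (ih (b-1) (m+1) (by omega)) _
    have halg : ENNReal.ofReal β * ρ ^ (m-1) + ENNReal.ofReal (1 - β) * ρ ^ (m+1) = ρ ^ m := by
      have hm1 : m - 1 + 1 = m := by omega
      calc ENNReal.ofReal β * ρ ^ (m-1) + ENNReal.ofReal (1 - β) * ρ ^ (m+1)
          = ENNReal.ofReal (1 - β) * (ρ * ρ ^ (m-1))
            + (ENNReal.ofReal (1 - β) * ρ) * ρ ^ m := by
            rw [e1 hβ0 hβ1]
            ring
        _ = ENNReal.ofReal (1 - β) * ρ ^ m + ENNReal.ofReal β * ρ ^ m := by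
            rw [← pow_succ' ρ (m-1), hm1, ← e1 hβ0 hβ1]
        _ = (ENNReal.ofReal (1 - β) + ENNReal.ofReal β) * ρ ^ m := by ring
        _ = ρ ^ m := by rw [e2 hβ0 hβ1, one_mul]
    calc μ (bwdBad X (n+1) b m)
        ≤ μ (bwdBad X (n+1) b m ∩ {ω | X b ω = -1})
          + μ (bwdBad X (n+1) b m ∩ {ω | X b ω = 1}) :=
          measure_split hmeas hβ0 (le_of_lt hβ1) hup hdown b _
      _ ≤ ENNReal.ofReal β * ρ ^ (m-1) + ENNReal.ofReal (1 - β) * ρ ^ (m+1) :=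
          add_le_add hb1 hb2
      _ = ρ ^ m := halg

lemma good_bound (hβ2 : β < 1/2) :
    ENNReal.ofReal ((1 - 2*β)^2) ≤ μ {ω | IsPivot (fun k => X k ω) 0} := by
  set ρ := ENNReal.ofReal (β / (1 - β)) with hρ
  have hρle : ρ ≤ ENNReal.ofReal (2*β) := by
    apply ENNReal.ofReal_le_ofReal
    rw [div_le_iff₀ (by linarith)]
    nlinarith
  set Fb := ⋃ n : ℕ, fwdBad X n 0 0 with hFbdef
  set Bb := ⋃ n : ℕ, bwdBad X n (-1) 1 with hBbdef
  have hFmeas : MeasurableSet[mS X {k : ℤ | 0 ≤ k}] Fb :=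
    MeasurableSet.iUnion (fun n => fwdBad_mS (fun k hk => hk) n 0)
  have hBmeas : MeasurableSet[mS X {k : ℤ | k ≤ -1}] Bb :=
    MeasurableSet.iUnion (fun n => bwdBad_mS (fun k hk => hk) n 1)
  have hFmono : Monotone (fun n : ℕ => fwdBad X n 0 0) := by
    intro p q hpq ω hω
    obtain ⟨j, hj, h⟩ := hω
    simp only [Finset.mem_Ico] at hj
    refine ⟨j, ?_, h⟩
    simp only [Finset.mem_Ico]
    constructor
    · exact hj.1
    · have : (p:ℤ) ≤ (q:ℤ) := by exact_mod_cast hpq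
      omega
  have hBmono : Monotone (fun n : ℕ => bwdBad X n (-1) 1) := by
    intro p q hpq ω hω
    obtain ⟨i, hi, h⟩ := hω
    simp only [Finset.mem_Ioc] at hi
    refine ⟨i, ?_, h⟩
    simp only [Finset.mem_Ioc]
    constructor
    · have : (p:ℤ) ≤ (q:ℤ) := by exact_mod_cast hpq
      omega
    · exact hi.2
  have hFbound : μ Fb ≤ ENNReal.ofReal (2*β) := by
    rw [hFbdef, Directed.measure_iUnion hFmono.directed_le]
    exact iSup_le (fun n => fwdBad_zero hmeas hindep hβ0 hβ1 hup hdown n)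
  have hBbound : μ Bb ≤ ENNReal.ofReal (2*β) := by
    rw [hBbdef, Directed.measure_iUnion hBmono.directed_le]
    refine iSup_le (fun n => ?_)
    calc μ (bwdBad X n (-1) 1) ≤ ρ ^ 1 :=
        bwdBad_bound hmeas hindep hβ0 hβ1 hup hdown n (-1) 1 le_rfl
      _ = ρ := pow_one ρ
      _ ≤ ENNReal.ofReal (2*β) := hρle
  have hd : Disjoint {k : ℤ | 0 ≤ k} {k : ℤ | k ≤ -1} := by
    rw [Set.disjoint_left]
    intro k hk hk'
    simp only [Set.mem_setOf_eq] at hk hk'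
    omega
  have hindep2 : μ (Fbᶜ ∩ Bbᶜ) = μ Fbᶜ * μ Bbᶜ :=
    indep_mS hmeas hindep hd hFmeas.compl hBmeas.compl
  have hsub : ENNReal.ofReal (1 - 2*β) = 1 - ENNReal.ofReal (2*β) := by
    rw [show (1:ℝ) - 2*β = 1 - 2*β from rfl, ENNReal.ofReal_sub 1 (by linarith),
      ENNReal.ofReal_one]
  have hF : ENNReal.ofReal (1 - 2*β) ≤ μ Fbᶜ := by
    rw [prob_compl_eq_one_sub (mS_le hmeas _ _ hFmeas), hsub]
    exact tsub_le_tsub_left hFbound 1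
  have hB : ENNReal.ofReal (1 - 2*β) ≤ μ Bbᶜ := by
    rw [prob_compl_eq_one_sub (mS_le hmeas _ _ hBmeas), hsub]
    exact tsub_le_tsub_left hBbound 1
  have hincl : Fbᶜ ∩ Bbᶜ ⊆ {ω | IsPivot (fun k => X k ω) 0} := by
    rintro ω ⟨hωF, hωB⟩
    have Hf : ∀ j : ℤ, 0 ≤ j → 1 ≤ ∑ k ∈ Finset.Icc 0 j, X k ω := by
      intro j hj
      by_contra hcon
      push_neg at hcon
      refine hωF (Set.mem_iUnion.2 ⟨j.toNat + 1, j, ?_, by omega⟩)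
      simp only [Finset.mem_Ico]
      constructor
      · exact hj
      · push_cast
        omega
    have Hb : ∀ i : ℤ, i ≤ -1 → 0 ≤ ∑ k ∈ Finset.Icc i (-1), X k ω := by
      intro i hi
      by_contra hcon
      push_neg at hcon
      refine hωB (Set.mem_iUnion.2 ⟨(-1 - i).toNat + 1, i, ?_, by omega⟩)
      simp only [Finset.mem_Ioc]
      constructor
      · push_cast
        omega
      · exact hi
    intro i j hi hj
    show 0 < ∑ k ∈ Finset.Icc i j, X k ω
    rcases le_or_gt i (-1) with hi1 | hi1
    · have hsplit := sum_Icc_split (fun k => X k ω) (show i ≤ -1 + 1 by omega)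
        (show (-1:ℤ) ≤ j by omega)
      norm_num at hsplit
      rw [hsplit]
      have h1 := Hb i hi1
      have h2 := Hf j hj
      omega
    · have hi0 : i = 0 := by omega
      subst hi0
      have h2 := Hf j hj
      omega
  calc ENNReal.ofReal ((1 - 2*β)^2)
      = ENNReal.ofReal (1 - 2*β) * ENNReal.ofReal (1 - 2*β) := by
        rw [← ENNReal.ofReal_mul (by linarith), sq]
    _ ≤ μ Fbᶜ * μ Bbᶜ := mul_le_mul' hF hB
    _ = μ (Fbᶜ ∩ Bbᶜ) := hindep2.symm
    _ ≤ μ {ω | IsPivot (fun k => X k ω) 0} := measure_mono hincl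

end Bounds

end PivotAux

/-- For i.i.d. ±1 variables indexed by `ℤ` with `P(X k = 1) = 1 − β`,
`P(X k = −1) = β`, `β ∈ [0, 1/2)`, the probability that index `0` is a pivot is at
least `(1 − 2β)²`; in particular it is strictly positive. -/
theorem pivot_prob_lower_bound
    {Ω : Type*} [MeasurableSpace Ω] (μ : Measure Ω) [IsProbabilityMeasure μ]
    (β : ℝ) (hβ : β ∈ Set.Ico (0 : ℝ) (1 / 2))
    (X : ℤ → Ω → ℤ) (hmeas : ∀ k, Measurable (X k))
    (hindep : iIndepFun X μ)
    (hup : ∀ k, μ {ω | X k ω = 1} = ENNReal.ofReal (1 - β))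
    (hdown : ∀ k, μ {ω | X k ω = -1} = ENNReal.ofReal β) :
    (1 - 2 * β) ^ 2 ≤ (μ {ω | IsPivot (fun k => X k ω) 0}).toReal
    ∧ 0 < μ {ω | IsPivot (fun k => X k ω) 0} := by
  obtain ⟨hβ0, hβ2⟩ := hβ
  have hβ1 : β < 1 := by linarith
  have hmain := PivotAux.good_bound hmeas hindep hβ0 hβ1 hup hdown hβ2
  have hpos : (0:ℝ) < (1 - 2*β)^2 := pow_pos (by linarith) 2
  constructor
  · have hne : μ {ω | IsPivot (fun k => X k ω) 0} ≠ ⊤ := measure_ne_top μ _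
    calc (1 - 2*β)^2 = (ENNReal.ofReal ((1 - 2*β)^2)).toReal :=
        (ENNReal.toReal_ofReal (le_of_lt hpos)).symm
      _ ≤ (μ {ω | IsPivot (fun k => X k ω) 0}).toReal := ENNReal.toReal_mono hne hmain
  · exact lt_of_lt_of_le (ENNReal.ofReal_pos.2 hpos) hmain
end

section
/- Fix an integer k ≥ 1. Let T_win be the index of the k-th trial i with X_i = 1 (the k-th adversary block) and T_lose the index of the k-th trial i with X_i = 0 (the k-th honest chain-growth event). Then P(T_win < T_lose) = P( Σ_{i=1}^{2k−1} X_i ≥ k ) ≤ exp( −2(2k−1)(1/2 − p)² ). That is, the probability that an adversary with block production rate below the honest chain growth rate builds a chain of length k before the honest chain reaches length k is exponentially small in k. -/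
open MeasureTheory ProbabilityTheory Finset Filter

lemma cnt_mono (P : ℕ → Prop) [DecidablePred P] {m n : ℕ} (h : m ≤ n) :
    ((Finset.Icc 1 m).filter P).card ≤ ((Finset.Icc 1 n).filter P).card :=
  Finset.card_le_card (Finset.filter_subset_filter _ (Finset.Icc_subset_Icc_right h))

lemma cnt_add {f : ℕ → ℕ} (hf : ∀ i, f i = 0 ∨ f i = 1) (n : ℕ) :
    ((Finset.Icc 1 n).filter (fun i => f i = 1)).card
      + ((Finset.Icc 1 n).filter (fun i => f i = 0)).card = n := by
  classical
  have h := Finset.card_filter_add_card_filter_not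
    (s := Finset.Icc 1 n) (p := fun i => f i = 1)
  have h2 : (Finset.Icc 1 n).filter (fun i => ¬ f i = 1)
      = (Finset.Icc 1 n).filter (fun i => f i = 0) := by
    apply Finset.filter_congr
    intro i _
    rcases hf i with h' | h' <;> simp [h']
  rw [h2] at h
  simpa [Nat.card_Icc] using h

lemma sum_eq_cnt {f : ℕ → ℕ} (hf : ∀ i, f i = 0 ∨ f i = 1) (n : ℕ) :
    ∑ i ∈ Finset.Icc 1 n, f i = ((Finset.Icc 1 n).filter (fun i => f i = 1)).card := by
  classical
  rw [Finset.card_filter]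
  apply Finset.sum_congr rfl
  intro i _
  rcases hf i with h | h <;> simp [h]

lemma race_iff {f : ℕ → ℕ} (hf : ∀ i, f i = 0 ∨ f i = 1) {k : ℕ} (hk : 1 ≤ k)
    (h1 : {n : ℕ | k ≤ ((Finset.Icc 1 n).filter (fun i => f i = 1)).card}.Nonempty)
    (h0 : {n : ℕ | k ≤ ((Finset.Icc 1 n).filter (fun i => f i = 0)).card}.Nonempty) :
    (sInf {n : ℕ | k ≤ ((Finset.Icc 1 n).filter (fun i => f i = 1)).card} <
      sInf {n : ℕ | k ≤ ((Finset.Icc 1 n).filter (fun i => f i = 0)).card}) ↔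
    k ≤ ((Finset.Icc 1 (2 * k - 1)).filter (fun i => f i = 1)).card := by
  classical
  have hamem : k ≤ ((Finset.Icc 1
      (sInf {n : ℕ | k ≤ ((Finset.Icc 1 n).filter (fun i => f i = 1)).card})).filter
      (fun i => f i = 1)).card := Nat.sInf_mem h1
  have hbmem : k ≤ ((Finset.Icc 1
      (sInf {n : ℕ | k ≤ ((Finset.Icc 1 n).filter (fun i => f i = 0)).card})).filter
      (fun i => f i = 0)).card := Nat.sInf_mem h0
  generalize hA : sInf {n : ℕ | k ≤ ((Finset.Icc 1 n).filter (fun i => f i = 1)).card} = a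
      at hamem ⊢
  generalize hB : sInf {n : ℕ | k ≤ ((Finset.Icc 1 n).filter (fun i => f i = 0)).card} = b
      at hbmem ⊢
  constructor
  · intro hab
    have haub : a ≤ 2 * k - 1 := by
      by_contra hcon
      push_neg at hcon
      have h1' : ((Finset.Icc 1 (a - 1)).filter (fun i => f i = 1)).card < k := by
        by_contra h
        push_neg at h
        have h' := Nat.sInf_le (show (a - 1) ∈
          {n : ℕ | k ≤ ((Finset.Icc 1 n).filter (fun i => f i = 1)).card} from h)
        rw [hA] at h'
        omega
      have hsum := cnt_add hf (a - 1)
      have h0' : k ≤ ((Finset.Icc 1 (a - 1)).filter (fun i => f i = 0)).card := by omega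
      have hble := Nat.sInf_le (show (a - 1) ∈
          {n : ℕ | k ≤ ((Finset.Icc 1 n).filter (fun i => f i = 0)).card} from h0')
      rw [hB] at hble
      omega
    exact le_trans hamem (cnt_mono _ haub)
  · intro h
    have haub := Nat.sInf_le (show (2 * k - 1) ∈
        {n : ℕ | k ≤ ((Finset.Icc 1 n).filter (fun i => f i = 1)).card} from h)
    rw [hA] at haub
    have hsum := cnt_add hf a
    have hc0a : ((Finset.Icc 1 a).filter (fun i => f i = 0)).card < k := by omega
    by_contra hcon
    push_neg at hcon
    have hmono : ((Finset.Icc 1 b).filter (fun i => f i = 0)).card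
        ≤ ((Finset.Icc 1 a).filter (fun i => f i = 0)).card := cnt_mono _ hcon
    omega

lemma no_hit_null {Ω : Type*} [MeasurableSpace Ω] (μ : Measure Ω) [IsProbabilityMeasure μ]
    (X : ℕ → Ω → ℕ) (hindep : iIndepFun X μ)
    (v w : ℕ) (hvw : ∀ i ω, X i ω = w ∨ X i ω = v)
    (r : ENNReal) (hr : r < 1) (hw : ∀ i, μ (X i ⁻¹' {w}) = r) (k : ℕ) :
    μ {ω | ∀ m, ((Finset.Icc 1 m).filter (fun i => X i ω = v)).card < k} = 0 := by
  classical
  set N := {ω | ∀ m, ((Finset.Icc 1 m).filter (fun i => X i ω = v)).card < k} with hN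
  have key : ∀ L, 1 ≤ L → μ N ≤ (k : ENNReal) * r ^ L := by
    intro L hL
    have hsub : N ⊆ ⋃ j ∈ Finset.range k,
        ⋂ i ∈ Finset.Icc (j * L + 1) ((j + 1) * L), X i ⁻¹' {w} := by
      intro ω hω
      by_contra hc
      simp only [Set.mem_iUnion, Set.mem_iInter, not_exists, not_forall] at hc
      have hch : ∀ j, ∃ i, j < k → (i ∈ Finset.Icc (j * L + 1) ((j + 1) * L) ∧ X i ω = v) := by
        intro j
        by_cases hj : j < k
        · obtain ⟨i, hi, hiw⟩ := hc j (Finset.mem_range.mpr hj)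
          refine ⟨i, fun _ => ⟨hi, ?_⟩⟩
          rcases hvw i ω with h | h
          · exact absurd (by simpa using h) hiw
          · exact h
        · exact ⟨0, fun h => absurd h hj⟩
      choose g hg using hch
      have hcard : k ≤ ((Finset.Icc 1 (k * L)).filter (fun i => X i ω = v)).card := by
        have hmaps : ∀ j ∈ Finset.range k,
            g j ∈ (Finset.Icc 1 (k * L)).filter (fun i => X i ω = v) := by
          intro j hj
          obtain ⟨hmem, hv'⟩ := hg j (Finset.mem_range.mp hj)
          simp only [Finset.mem_Icc] at hmem
          simp only [Finset.mem_filter, Finset.mem_Icc]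
          refine ⟨⟨by omega, ?_⟩, hv'⟩
          calc g j ≤ (j + 1) * L := hmem.2
            _ ≤ k * L := Nat.mul_le_mul_right _ (Finset.mem_range.mp hj)
        have hinj : Set.InjOn g ↑(Finset.range k) := by
          intro j1 hj1 j2 hj2 heq
          simp only [Finset.coe_range, Set.mem_Iio] at hj1 hj2
          obtain ⟨hm1, _⟩ := hg j1 hj1
          obtain ⟨hm2, _⟩ := hg j2 hj2
          simp only [Finset.mem_Icc] at hm1 hm2
          rcases lt_trichotomy j1 j2 with h | h | h
          · exfalso
            have hml : (j1 + 1) * L ≤ j2 * L := Nat.mul_le_mul_right _ h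
            have h1 := hm1.2
            have h2 := hm2.1
            omega
          · exact h
          · exfalso
            have hml : (j2 + 1) * L ≤ j1 * L := Nat.mul_le_mul_right _ h
            have h1 := hm2.2
            have h2 := hm1.1
            omega
        have := Finset.card_le_card_of_injOn g hmaps hinj
        simpa using this
      exact absurd hcard (not_le.mpr (hω (k * L)))
    calc μ N ≤ μ (⋃ j ∈ Finset.range k,
          ⋂ i ∈ Finset.Icc (j * L + 1) ((j + 1) * L), X i ⁻¹' {w}) := measure_mono hsub
      _ ≤ ∑ j ∈ Finset.range k,
          μ (⋂ i ∈ Finset.Icc (j * L + 1) ((j + 1) * L), X i ⁻¹' {w}) :=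
            measure_biUnion_finset_le _ _
      _ ≤ ∑ _j ∈ Finset.range k, r ^ L := by
          apply Finset.sum_le_sum
          intro j _
          have := hindep.measure_inter_preimage_eq_mul
            (Finset.Icc (j * L + 1) ((j + 1) * L)) (sets := fun _ => ({w} : Set ℕ))
            (fun i _ => measurableSet_singleton w)
          rw [this]
          have hcardIcc : (Finset.Icc (j * L + 1) ((j + 1) * L)).card = L := by
            have : (j + 1) * L = j * L + L := by ring
            simp [Nat.card_Icc, this]
          rw [Finset.prod_congr rfl (fun i _ => hw i), Finset.prod_const, hcardIcc]
      _ = (k : ENNReal) * r ^ L := by simp [Finset.sum_const, mul_comm]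
  have hlim : Tendsto (fun L : ℕ => (k : ENNReal) * r ^ L) atTop (nhds 0) := by
    have := ENNReal.Tendsto.const_mul (a := (k : ENNReal))
      (ENNReal.tendsto_pow_atTop_nhds_zero_of_lt_one hr) (Or.inr (by simp))
    simpa using this
  have : μ N ≤ 0 := ge_of_tendsto hlim (eventually_atTop.mpr ⟨1, fun L hL => key L hL⟩)
  exact le_antisymm this (zero_le)

lemma bernoulli_chernoff_num {p : ℝ} (hp0 : 0 < p) (hp2 : p < 1 / 2) {k : ℕ} (hk : 1 ≤ k) :
    Real.exp (-(Real.log ((1 - p) / p)) * (k : ℝ))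
      * (1 - p + p * Real.exp (Real.log ((1 - p) / p))) ^ (2 * k - 1)
    ≤ Real.exp (-2 * (2 * (k : ℝ) - 1) * (1 / 2 - p) ^ 2) := by
  obtain ⟨m, rfl⟩ : ∃ m, k = m + 1 := ⟨k - 1, by omega⟩
  have hq : 0 < 1 - p := by linarith
  have hx : (0 : ℝ) < (1 - p) / p := div_pos hq hp0
  have h2 : 2 * (m + 1) - 1 = 2 * m + 1 := by omega
  rw [h2]
  have e1 : 1 - p + p * Real.exp (Real.log ((1 - p) / p)) = 2 * (1 - p) := by
    rw [Real.exp_log hx]; field_simp; ring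
  rw [e1]
  have e2 : Real.exp (-(Real.log ((1 - p) / p)) * ((m + 1 : ℕ) : ℝ))
      = (((1 - p) / p) ^ (m + 1))⁻¹ := by
    rw [show (-(Real.log ((1 - p) / p)) * ((m + 1 : ℕ) : ℝ))
        = -(((m + 1 : ℕ) : ℝ) * Real.log ((1 - p) / p)) by ring,
      Real.exp_neg, Real.exp_nat_mul, Real.exp_log hx]
  rw [e2]
  have hLHS : (((1 - p) / p) ^ (m + 1))⁻¹ * (2 * (1 - p)) ^ (2 * m + 1)
      = (4 * p * (1 - p)) ^ (m + 1) / (2 * (1 - p)) := by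
    have h2q : (2 * (1 - p)) ≠ 0 := by positivity
    rw [eq_div_iff h2q, mul_assoc, ← pow_succ,
      show 2 * m + 1 + 1 = 2 * (m + 1) by ring, pow_mul, ← inv_pow, ← mul_pow]
    congr 1
    field_simp
    ring
  rw [hLHS]
  have h4pq : 4 * p * (1 - p) = 1 - (1 - 2 * p) ^ 2 := by ring
  have hc0 : (0 : ℝ) ≤ (1 - 2 * p) ^ 2 := sq_nonneg _
  have hpow : (4 * p * (1 - p)) ^ (m + 1) ≤ Real.exp (-((1 - 2 * p) ^ 2)) ^ (m + 1) := by
    apply pow_le_pow_left₀ (by nlinarith)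
    rw [h4pq]
    have := Real.add_one_le_exp (-((1 - 2 * p) ^ 2))
    linarith
  have hdiv : (4 * p * (1 - p)) ^ (m + 1) / (2 * (1 - p))
      ≤ (4 * p * (1 - p)) ^ (m + 1) := by
    apply div_le_self (by positivity) (by linarith)
  calc (4 * p * (1 - p)) ^ (m + 1) / (2 * (1 - p))
      ≤ Real.exp (-((1 - 2 * p) ^ 2)) ^ (m + 1) := hdiv.trans hpow
    _ = Real.exp (-(((m : ℝ) + 1) * (1 - 2 * p) ^ 2)) := by
        rw [← Real.exp_nat_mul]; push_cast; ring_nf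
    _ ≤ Real.exp (-2 * (2 * ((m + 1 : ℕ) : ℝ) - 1) * (1 / 2 - p) ^ 2) := by
        apply Real.exp_le_exp.mpr
        have hcc : (1 - 2 * p) ^ 2 = 4 * (1 / 2 - p) ^ 2 := by ring
        push_cast
        nlinarith [sq_nonneg (1 / 2 - p)]


/-- Let `(X i)` be i.i.d. Bernoulli(`p`) trials with `p ∈ (0, 1/2)`, where `X i = 1`
is an adversary block production event and `X i = 0` an honest chain-growth event.
Let `Twin` be the index of the `k`-th trial with `X i = 1` and `Tlose` that of the
`k`-th trial with `X i = 0`. Then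
`P(Twin < Tlose) = P(∑_{i=1}^{2k−1} X i ≥ k) ≤ exp(−2(2k−1)(1/2 − p)²)`:
the probability that the adversary builds a chain of length `k` before the honest
chain reaches length `k` is exponentially small in `k`. -/
theorem adversary_race_bound
    {Ω : Type*} [MeasurableSpace Ω] (μ : Measure Ω) [IsProbabilityMeasure μ]
    (p : ℝ) (hp : p ∈ Set.Ioo (0 : ℝ) (1 / 2))
    (X : ℕ → Ω → ℕ) (hmeas : ∀ i, Measurable (X i))
    (hval : ∀ i ω, X i ω = 0 ∨ X i ω = 1)
    (hindep : iIndepFun X μ)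
    (hone : ∀ i, μ {ω | X i ω = 1} = ENNReal.ofReal p)
    (k : ℕ) (hk : 1 ≤ k)
    (Twin Tlose : Ω → ℕ)
    (hTwin : ∀ ω, Twin ω =
      sInf {n : ℕ | k ≤ ((Finset.Icc 1 n).filter (fun i => X i ω = 1)).card})
    (hTlose : ∀ ω, Tlose ω =
      sInf {n : ℕ | k ≤ ((Finset.Icc 1 n).filter (fun i => X i ω = 0)).card}) :
    μ {ω | Twin ω < Tlose ω}
        = μ {ω | k ≤ ∑ i ∈ Finset.Icc 1 (2 * k - 1), X i ω}
    ∧ μ {ω | Twin ω < Tlose ω}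
        ≤ ENNReal.ofReal (Real.exp (-2 * (2 * (k : ℝ) - 1) * (1 / 2 - p) ^ 2)) := by
  classical
  obtain ⟨hp0, hp2⟩ := hp
  have hq : 0 < 1 - p := by linarith
  -- the two null sets
  have hNull1 : μ {ω | ∀ m, ((Finset.Icc 1 m).filter (fun i => X i ω = 1)).card < k} = 0 := by
    apply no_hit_null μ X hindep 1 0 hval (1 - ENNReal.ofReal p) ?_ ?_ k
    · exact ENNReal.sub_lt_self (by simp) (by simp)
        (ENNReal.ofReal_pos.mpr hp0).ne'
    · intro i
      have hcompl : (X i ⁻¹' {0}) = (X i ⁻¹' {1})ᶜ := by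
        ext ω
        rcases hval i ω with h | h <;> simp [h]
      rw [hcompl, prob_compl_eq_one_sub ((hmeas i) (measurableSet_singleton 1))]
      congr 1
      exact hone i
  have hNull0 : μ {ω | ∀ m, ((Finset.Icc 1 m).filter (fun i => X i ω = 0)).card < k} = 0 := by
    apply no_hit_null μ X hindep 0 1 (fun i ω => (hval i ω).symm) (ENNReal.ofReal p) ?_ ?_ k
    · exact ENNReal.ofReal_lt_one.mpr (by linarith)
    · intro i
      exact hone i
  -- Part 1 : a.e. equality of the two events
  have hae : {ω | Twin ω < Tlose ω}
      =ᵐ[μ] {ω | k ≤ ∑ i ∈ Finset.Icc 1 (2 * k - 1), X i ω} := by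
    have hN : μ ({ω | ∀ m, ((Finset.Icc 1 m).filter (fun i => X i ω = 1)).card < k}
        ∪ {ω | ∀ m, ((Finset.Icc 1 m).filter (fun i => X i ω = 0)).card < k}) = 0 :=
      measure_union_null hNull1 hNull0
    have hN' := measure_eq_zero_iff_ae_notMem.mp hN
    refine Filter.eventuallyEq_set.mpr (hN'.mono fun ω hω => ?_)
    simp only [Set.mem_union, not_or, Set.mem_setOf_eq] at hω
    obtain ⟨h1, h0⟩ := hω
    push_neg at h1 h0
    simp only [Set.mem_setOf_eq]
    rw [hTwin ω, hTlose ω, sum_eq_cnt (fun i => hval i ω) (2 * k - 1)]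
    exact race_iff (fun i => hval i ω) hk h1 h0
  have hPart1 : μ {ω | Twin ω < Tlose ω}
      = μ {ω | k ≤ ∑ i ∈ Finset.Icc 1 (2 * k - 1), X i ω} := measure_congr hae
  refine ⟨hPart1, ?_⟩
  rw [hPart1]
  -- Part 2 : Chernoff bound
  set t := Real.log ((1 - p) / p) with ht
  have ht0 : 0 ≤ t := Real.log_nonneg (by rw [le_div_iff₀ hp0]; linarith)
  set Y : ℕ → Ω → ℝ := fun i ω => (X i ω : ℝ) with hY
  have hYmeas : ∀ i, Measurable (Y i) := fun i => measurable_from_top.comp (hmeas i)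
  have hYindep : iIndepFun Y μ :=
    hindep.comp (fun _ => (fun x : ℕ => (x : ℝ))) (fun _ => measurable_from_top)
  have hrw : ∀ i, (fun ω => Real.exp (t * Y i ω))
      = fun ω => Set.indicator {ω | X i ω = 1} (fun _ => Real.exp t - 1) ω + 1 := by
    intro i
    funext ω
    rcases hval i ω with h | h
    · have hmem : ω ∉ {ω | X i ω = 1} := by simp [h]
      simp [hY, h, Set.indicator_of_notMem hmem]
    · have hmem : ω ∈ {ω | X i ω = 1} := h
      simp [hY, h, Set.indicator_of_mem hmem]
  have hsetm : ∀ i, MeasurableSet {ω | X i ω = 1} :=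
    fun i => (hmeas i) (measurableSet_singleton 1)
  have hint : ∀ i, Integrable (fun ω => Real.exp (t * Y i ω)) μ := by
    intro i
    rw [hrw i]
    exact ((integrable_const _).indicator (hsetm i)).add (integrable_const 1)
  have hmgf : ∀ i, mgf (Y i) μ t = 1 - p + p * Real.exp t := by
    intro i
    rw [mgf, hrw i, integral_add ((integrable_const _).indicator (hsetm i)) (integrable_const 1),
      integral_indicator_const _ (hsetm i), integral_const, measureReal_def, hone i,
      ENNReal.toReal_ofReal hp0.le]
    simp [measure_univ]
    ring
  have hintsum : Integrable (fun ω => Real.exp (t * (∑ i ∈ Finset.Icc 1 (2 * k - 1), Y i) ω)) μ :=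
    hYindep.integrable_exp_mul_sum hYmeas (fun i _ => hint i)
  have hmgfsum : mgf (∑ i ∈ Finset.Icc 1 (2 * k - 1), Y i) μ t
      = (1 - p + p * Real.exp t) ^ (2 * k - 1) := by
    rw [hYindep.mgf_sum hYmeas, Finset.prod_congr rfl (fun i _ => hmgf i), Finset.prod_const,
      Nat.card_Icc, Nat.add_sub_cancel]
  have hch := measure_ge_le_exp_mul_mgf (μ := μ)
    (X := ∑ i ∈ Finset.Icc 1 (2 * k - 1), Y i) (k : ℝ) ht0 hintsum
  rw [hmgfsum] at hch
  have hsetEq : {ω | k ≤ ∑ i ∈ Finset.Icc 1 (2 * k - 1), X i ω}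
      = {ω | (k : ℝ) ≤ (∑ i ∈ Finset.Icc 1 (2 * k - 1), Y i) ω} := by
    ext ω
    simp only [Set.mem_setOf_eq, Finset.sum_apply, hY]
    rw [← Nat.cast_sum]
    exact Nat.cast_le.symm
  rw [hsetEq]
  have hnum := bernoulli_chernoff_num hp0 hp2 hk
  calc μ {ω | (k : ℝ) ≤ (∑ i ∈ Finset.Icc 1 (2 * k - 1), Y i) ω}
      = ENNReal.ofReal (μ {ω | (k : ℝ)
          ≤ (∑ i ∈ Finset.Icc 1 (2 * k - 1), Y i) ω}).toReal :=
        (ENNReal.ofReal_toReal (measure_ne_top μ _)).symm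
    _ ≤ ENNReal.ofReal (Real.exp (-2 * (2 * (k : ℝ) - 1) * (1 / 2 - p) ^ 2)) :=
        ENNReal.ofReal_le_ofReal (hch.trans hnum)
end
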